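/- Let A ∈ ℝ^{m×n}, c ∈ ℝ^n and define the LP value function v(b) := min{⟨c,x⟩ : Ax = b, x ≥ 0} on the set of b where the LP is feasible and bounded. Then for each such b the one-sided directional derivative of v at b in direction h (whenever v(b + t h) is finite for small t > 0) equals max{⟨u, h⟩ : u ∈ Φ*(b)}, where Φ*(b) = {u : A^T u ≤ c, ⟨u, b⟩ = v(b)} is the set of dual optimal solutions. -/

import Mathlib

open Finset

section LPAux

variable {κ ι : Type*} [Fintype κ] [Fintype ι]

set_option linter.unusedSectionVars false

/-- Reduce a nonnegative combination to one with linearly independent support,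
not increasing the cost. -/
lemma lp_reduce (g : κ → ι → ℝ) (c : κ → ℝ)
    (hb : ∀ d : κ → ℝ, (∀ j, 0 ≤ d j) → ∑ j, d j • g j = 0 → 0 ≤ ∑ j, c j * d j)
    (x : κ → ℝ) (hx : ∀ j, 0 ≤ x j) :
    ∃ y : κ → ℝ, (∀ j, 0 ≤ y j) ∧ ∑ j, y j • g j = ∑ j, x j • g j ∧
      ∑ j, c j * y j ≤ ∑ j, c j * x j ∧
      LinearIndependent ℝ (fun j : {j // y j ≠ 0} => g j) := by
  classical
  suffices H : ∀ (N : ℕ) (x : κ → ℝ), (∀ j, 0 ≤ x j) →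
      (Finset.univ.filter (fun j => x j ≠ 0)).card ≤ N →
      ∃ y : κ → ℝ, (∀ j, 0 ≤ y j) ∧ ∑ j, y j • g j = ∑ j, x j • g j ∧
        ∑ j, c j * y j ≤ ∑ j, c j * x j ∧
        LinearIndependent ℝ (fun j : {j // y j ≠ 0} => g j) by
    exact H _ x hx le_rfl
  intro N
  induction N with
  | zero =>
    intro x hx hcard
    have hx0 : ∀ j, x j = 0 := by
      intro j
      by_contra hj
      have : j ∈ Finset.univ.filter (fun j => x j ≠ 0) := by simp [hj]
      have := Finset.card_pos.mpr ⟨j, this⟩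
      omega
    refine ⟨x, hx, rfl, le_rfl, ?_⟩
    have : IsEmpty {j // x j ≠ 0} := ⟨fun ⟨j, hj⟩ => hj (hx0 j)⟩
    exact linearIndependent_empty_type
  | succ N ih =>
    intro x hx hcard
    by_cases hind : LinearIndependent ℝ (fun j : {j // x j ≠ 0} => g j)
    · exact ⟨x, hx, rfl, le_rfl, hind⟩
    · -- get a dependence supported on supp x
      rw [Fintype.not_linearIndependent_iff] at hind
      obtain ⟨a, ha0, i₀, hi₀⟩ := hind
      set d : κ → ℝ := fun j => if hj : x j ≠ 0 then a ⟨j, hj⟩ else 0 with hd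
      have hdsupp : ∀ j, d j ≠ 0 → x j ≠ 0 := by
        intro j hj
        by_contra hxj
        exact hj (by simp [hd, hxj])
      have hda : ∀ j : {j // x j ≠ 0}, d j = a j := by
        rintro ⟨j, hj⟩; simp [hd, hj]
      have hdvec : ∑ j, d j • g j = 0 := by
        calc ∑ j, d j • g j
            = ∑ j ∈ Finset.univ.filter (fun j => x j ≠ 0), d j • g j :=
              (Finset.sum_filter_of_ne (fun j _ hj =>
                hdsupp j (fun h => hj (by simp [h])))).symm
          _ = ∑ j : {j // x j ≠ 0}, d (j : κ) • g (j : κ) :=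
              Finset.sum_subtype _ (by simp) _
          _ = ∑ j : {j // x j ≠ 0}, a j • g (j : κ) := by
              refine Finset.sum_congr rfl fun j _ => by rw [hda j]
          _ = 0 := ha0
      have hdcost : ∑ j, c j * d j = ∑ j : {j // x j ≠ 0}, c (j : κ) * a j := by
        calc ∑ j, c j * d j
            = ∑ j ∈ Finset.univ.filter (fun j => x j ≠ 0), c j * d j :=
              (Finset.sum_filter_of_ne (fun j _ hj =>
                hdsupp j (fun h => hj (by simp [h])))).symm
          _ = ∑ j : {j // x j ≠ 0}, c (j : κ) * d (j : κ) :=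
              Finset.sum_subtype _ (by simp) _
          _ = _ := Finset.sum_congr rfl fun j _ => by rw [hda j]
      -- choose a direction e with nonpositive cost and a negative entry
      have key : ∃ e : κ → ℝ, ∑ j, e j • g j = 0 ∧ (∀ j, e j ≠ 0 → x j ≠ 0) ∧
          ∑ j, c j * e j ≤ 0 ∧ ∃ j, e j < 0 := by
        have hnegd : ∑ j, (-d) j • g j = 0 := by
          simp only [Pi.neg_apply, neg_smul, Finset.sum_neg_distrib, hdvec, neg_zero]
        have hnegsupp : ∀ j, (-d) j ≠ 0 → x j ≠ 0 := fun j hj =>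
          hdsupp j (by simpa using hj)
        have hdnez : d (i₀ : κ) ≠ 0 := by rw [hda i₀]; exact hi₀
        by_cases hneg : ∃ j, d j < 0
        · by_cases hcd : ∑ j, c j * d j ≤ 0
          · exact ⟨d, hdvec, hdsupp, hcd, hneg⟩
          · -- cost of d positive: use -d; need a negative entry of -d
            by_cases hpos : ∃ j, 0 < d j
            · obtain ⟨j, hj⟩ := hpos
              refine ⟨-d, hnegd, hnegsupp, ?_, ⟨j, by simpa using hj⟩⟩
              have : ∑ j, c j * (-d) j = -∑ j, c j * d j := by
                simp [mul_neg, ← Finset.sum_neg_distrib]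
              rw [this]; linarith [le_of_lt (lt_of_not_ge hcd)]
            · -- d ≤ 0 everywhere, so -d ≥ 0, apply hb to -d
              exfalso
              push_neg at hpos
              have := hb (-d) (fun j => by simpa using hpos j) hnegd
              have : ∑ j, c j * (-d) j = -∑ j, c j * d j := by
                simp [mul_neg, ← Finset.sum_neg_distrib]
              linarith [hb (-d) (fun j => by simpa using hpos j) hnegd,
                lt_of_not_ge hcd, this ▸ hb (-d) (fun j => by simpa using hpos j) hnegd]
        · -- d ≥ 0 everywhere
          push_neg at hneg
          have hd0 : ∀ j, 0 ≤ d j := hneg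
          have hcd := hb d hd0 hdvec
          have hjpos : 0 < d (i₀ : κ) := lt_of_le_of_ne (hd0 _) (Ne.symm hdnez)
          refine ⟨-d, hnegd, hnegsupp, ?_, ⟨i₀, by simpa using hjpos⟩⟩
          have : ∑ j, c j * (-d) j = -∑ j, c j * d j := by
            simp [mul_neg, ← Finset.sum_neg_distrib]
          rw [this]; linarith
      obtain ⟨e, hevec, hesupp, hecost, j₁, hj₁⟩ := key
      -- line move
      set T : Finset κ := Finset.univ.filter (fun j => e j < 0) with hT
      have hTne : T.Nonempty := ⟨j₁, by simp [hT, hj₁]⟩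
      set t : ℝ := T.inf' hTne (fun j => x j / (-e j)) with ht
      have htnn : 0 ≤ t := by
        apply Finset.le_inf'
        intro j hj
        have hej : e j < 0 := by simpa [hT] using hj
        exact div_nonneg (hx j) (by linarith)
      obtain ⟨j₀, hj₀T, hj₀⟩ := Finset.exists_mem_eq_inf' hTne (fun j => x j / (-e j))
      have hej₀ : e j₀ < 0 := by simpa [hT] using hj₀T
      set y : κ → ℝ := fun j => x j + t * e j with hy
      have hxy : ∀ j, x j = 0 → y j = 0 := by
        intro j hxj
        have : e j = 0 := by
          by_contra hej
          exact hesupp j hej hxj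
        simp [hy, hxj, this]
      have hynn : ∀ j, 0 ≤ y j := by
        intro j
        rcases le_or_gt 0 (e j) with hej | hej
        · have : 0 ≤ t * e j := mul_nonneg htnn hej
          simp only [hy]; linarith [hx j]
        · have hle : t ≤ x j / (-e j) := by
            rw [ht]
            exact Finset.inf'_le _ (by simp [hT, hej])
          have : t * (-e j) ≤ x j := by
            rw [le_div_iff₀ (by linarith : (0:ℝ) < -e j)] at hle
            linarith
          simp only [hy]; nlinarith
      have hyj₀ : y j₀ = 0 := by
        have hxj₀ : x j₀ = t * (-e j₀) := by
          rw [ht, hj₀, div_mul_cancel₀ _ (by exact ne_of_gt (by linarith) : -e j₀ ≠ 0)]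
        simp only [hy, hxj₀]; ring
      have hxj₀ne : x j₀ ≠ 0 := hesupp j₀ (ne_of_lt hej₀)
      -- support strictly decreases
      have hsub : Finset.univ.filter (fun j => y j ≠ 0) ⊆
          (Finset.univ.filter (fun j => x j ≠ 0)).erase j₀ := by
        intro j hj
        have hyj : y j ≠ 0 := by simpa using hj
        have hxj : x j ≠ 0 := fun h => hyj (hxy j h)
        refine Finset.mem_erase.mpr ⟨?_, by simp [hxj]⟩
        rintro rfl
        exact hyj hyj₀
      have hcard' : (Finset.univ.filter (fun j => y j ≠ 0)).card ≤ N := by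
        have h1 := Finset.card_le_card hsub
        have h2 : ((Finset.univ.filter (fun j => x j ≠ 0)).erase j₀).card <
            (Finset.univ.filter (fun j => x j ≠ 0)).card :=
          Finset.card_erase_lt_of_mem (by simp [hxj₀ne])
        omega
      have hyvec : ∑ j, y j • g j = ∑ j, x j • g j := by
        have : ∀ j, y j • g j = x j • g j + t • (e j • g j) := by
          intro j
          simp only [hy, add_smul, smul_smul]
        rw [Finset.sum_congr rfl fun j _ => this j, Finset.sum_add_distrib,
          ← Finset.smul_sum, hevec, smul_zero, add_zero]
      have hycost : ∑ j, c j * y j ≤ ∑ j, c j * x j := by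
        have : ∑ j, c j * y j = ∑ j, c j * x j + t * ∑ j, c j * e j := by
          rw [Finset.mul_sum]
          rw [← Finset.sum_add_distrib]
          refine Finset.sum_congr rfl fun j _ => by simp only [hy]; ring
        rw [this]
        nlinarith
      obtain ⟨z, hznn, hzvec, hzcost, hzind⟩ := ih y hynn hcard'
      exact ⟨z, hznn, hzvec.trans hyvec, le_trans hzcost hycost, hzind⟩

lemma lp_basic_finite (g : κ → ι → ℝ) (w : ι → ℝ) :
    {x : κ → ℝ | (∀ j, 0 ≤ x j) ∧ ∑ j, x j • g j = w ∧
      LinearIndependent ℝ (fun j : {j // x j ≠ 0} => g j)}.Finite := by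
  classical
  apply Set.Finite.of_finite_image (f := fun x => Finset.univ.filter (fun j => x j ≠ 0))
    (Set.toFinite _)
  rintro x ⟨-, hxw, hxind⟩ x' ⟨-, hxw', -⟩ hsupp
  have hsame : ∀ j, x j ≠ 0 ↔ x' j ≠ 0 := by
    intro j
    have := Finset.ext_iff.mp hsupp j
    simpa using this
  -- d := x - x' is supported on supp x and kills the combination
  have hdvec : ∑ j, (x j - x' j) • g j = 0 := by
    simp only [sub_smul, Finset.sum_sub_distrib, hxw, hxw', sub_self]
  have hdsub : ∑ j : {j // x j ≠ 0}, (x (j : κ) - x' (j : κ)) • g (j : κ) = 0 := by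
    calc ∑ j : {j // x j ≠ 0}, (x (j : κ) - x' (j : κ)) • g (j : κ)
        = ∑ j ∈ Finset.univ.filter (fun j => x j ≠ 0), (x j - x' j) • g j :=
          (Finset.sum_subtype (p := fun j => x j ≠ 0) (Finset.univ.filter fun j => x j ≠ 0) (fun j => by simp) (fun j => (x j - x' j) • g j)).symm
      _ = ∑ j, (x j - x' j) • g j := by
          apply Finset.sum_filter_of_ne
          intro j _ hj
          intro hxj
          apply hj
          have hxj' : x' j = 0 := by
            by_contra hc
            exact ((hsame j).mpr hc) hxj
          simp [hxj, hxj']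
      _ = 0 := hdvec
  have hzero := Fintype.linearIndependent_iff.mp hxind
    (fun j => x (j : κ) - x' (j : κ)) hdsub
  funext j
  by_cases hj : x j ≠ 0
  · have := hzero ⟨j, hj⟩
    simpa [sub_eq_zero] using this
  · push_neg at hj
    have hj' : x' j = 0 := by
      by_contra hc
      exact ((hsame j).mpr hc) hj
    rw [hj, hj']

/-- A feasible, bounded-below LP in standard form attains its infimum. -/
lemma lp_attain (g : κ → ι → ℝ) (c : κ → ℝ) (w : ι → ℝ)
    (hfeas : ∃ x : κ → ℝ, (∀ j, 0 ≤ x j) ∧ ∑ j, x j • g j = w)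
    (hbdd : BddBelow {v | ∃ x : κ → ℝ, (∀ j, 0 ≤ x j) ∧ ∑ j, x j • g j = w ∧
      v = ∑ j, c j * x j}) :
    ∃ x : κ → ℝ, (∀ j, 0 ≤ x j) ∧ ∑ j, x j • g j = w ∧
      ∑ j, c j * x j = sInf {v | ∃ x : κ → ℝ, (∀ j, 0 ≤ x j) ∧ ∑ j, x j • g j = w ∧
        v = ∑ j, c j * x j} := by
  classical
  obtain ⟨x₀, hx₀, hx₀w⟩ := hfeas
  obtain ⟨L, hL⟩ := hbdd
  set vals := {v | ∃ x : κ → ℝ, (∀ j, 0 ≤ x j) ∧ ∑ j, x j • g j = w ∧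
    v = ∑ j, c j * x j} with hvals
  have hvne : vals.Nonempty := ⟨_, x₀, hx₀, hx₀w, rfl⟩
  -- no ray of negative cost
  have hb : ∀ d : κ → ℝ, (∀ j, 0 ≤ d j) → ∑ j, d j • g j = 0 → 0 ≤ ∑ j, c j * d j := by
    intro d hd hdvec
    by_contra hcd
    push_neg at hcd
    -- x₀ + t d is feasible with cost going to -∞
    have hfeast : ∀ t : ℝ, 0 ≤ t → (∑ j, c j * x₀ j) + t * ∑ j, c j * d j ∈ vals := by
      intro t ht
      refine ⟨fun j => x₀ j + t * d j, fun j => by dsimp only; nlinarith [hd j, hx₀ j, mul_nonneg ht (hd j)], ?_, ?_⟩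
      · have : ∀ j, (x₀ j + t * d j) • g j = x₀ j • g j + t • (d j • g j) := by
          intro j; simp only [add_smul, smul_smul]
        rw [Finset.sum_congr rfl fun j _ => this j, Finset.sum_add_distrib,
          ← Finset.smul_sum, hdvec, smul_zero, add_zero, hx₀w]
      · rw [Finset.mul_sum, ← Finset.sum_add_distrib]
        exact Finset.sum_congr rfl fun j _ => by ring
    set t₀ : ℝ := max 0 ((L - ∑ j, c j * x₀ j) / (∑ j, c j * d j) + 1) with ht₀
    have ht₀nn : 0 ≤ t₀ := le_max_left _ _
    have hq : (L - ∑ j, c j * x₀ j) / (∑ j, c j * d j) < t₀ := by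
      calc _ < (L - ∑ j, c j * x₀ j) / (∑ j, c j * d j) + 1 := by linarith
        _ ≤ t₀ := le_max_right _ _
    have hlt : t₀ * ∑ j, c j * d j < L - ∑ j, c j * x₀ j := by
      have := (div_lt_iff_of_neg hcd).mp hq
      linarith
    have := hL (hfeast t₀ ht₀nn)
    linarith
  -- basic feasible solutions
  set F := {x : κ → ℝ | (∀ j, 0 ≤ x j) ∧ ∑ j, x j • g j = w ∧
    LinearIndependent ℝ (fun j : {j // x j ≠ 0} => g j)} with hF
  have hFfin : F.Finite := lp_basic_finite g w
  have hFne : F.Nonempty := by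
    obtain ⟨y, hynn, hyvec, -, hyind⟩ := lp_reduce g c hb x₀ hx₀
    exact ⟨y, hynn, hyvec.trans hx₀w, hyind⟩
  obtain ⟨x₁, hx₁F, hx₁min⟩ := Set.exists_min_image F (fun x => ∑ j, c j * x j) hFfin hFne
  refine ⟨x₁, hx₁F.1, hx₁F.2.1, le_antisymm ?_ (csInf_le ⟨L, hL⟩ ⟨x₁, hx₁F.1, hx₁F.2.1, rfl⟩)⟩
  apply le_csInf hvne
  rintro v ⟨x, hxnn, hxvec, rfl⟩
  obtain ⟨y, hynn, hyvec, hycost, hyind⟩ := lp_reduce g c hb x hxnn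
  exact le_trans (hx₁min y ⟨hynn, hyvec.trans hxvec, hyind⟩) hycost

open RealInnerProductSpace in
/-- Farkas lemma: if `p` is not a nonnegative combination of the `g j`, there is a
separating vector. -/
lemma lp_farkas (g : κ → EuclideanSpace ℝ ι) (p : EuclideanSpace ℝ ι)
    (hp : ¬ ∃ t : κ → ℝ, (∀ j, 0 ≤ t j) ∧ ∑ j, t j • g j = p) :
    ∃ y : EuclideanSpace ℝ ι, (∀ j, 0 ≤ ⟪g j, y⟫) ∧ ⟪p, y⟫ < 0 := by
  classical
  set C : Set (EuclideanSpace ℝ ι) :=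
    {z | ∃ t : κ → ℝ, (∀ j, 0 ≤ t j) ∧ ∑ j, t j • g j = z} with hC
  have hzero : (0 : EuclideanSpace ℝ ι) ∈ C := ⟨0, fun j => le_rfl, by simp⟩
  -- C is a convex cone
  set K : ConvexCone ℝ (EuclideanSpace ℝ ι) :=
    { carrier := C
      smul_mem' := by
        rintro r hr z ⟨t, ht, rfl⟩
        exact ⟨fun j => r * t j, fun j => mul_nonneg hr.le (ht j), by
          rw [Finset.smul_sum]
          exact Finset.sum_congr rfl fun j _ => (smul_smul r (t j) (g j)).symm⟩
      add_mem' := by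
        rintro z ⟨t, ht, rfl⟩ z' ⟨t', ht', rfl⟩
        exact ⟨fun j => t j + t' j, fun j => add_nonneg (ht j) (ht' j), by
          rw [← Finset.sum_add_distrib]
          exact Finset.sum_congr rfl fun j _ => add_smul (t j) (t' j) (g j)⟩ } with hK
  -- C is closed
  have hclosed : IsClosed C := by
    set S : Finset κ → Set (EuclideanSpace ℝ ι) := fun B =>
      {z | LinearIndependent ℝ (fun j : {j // j ∈ B} => g (j : κ)) ∧
        ∃ t : {j // j ∈ B} → ℝ, (∀ j, 0 ≤ t j) ∧
          ∑ j : {j // j ∈ B}, t j • g (j : κ) = z} with hS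
    have hCunion : C = ⋃ B : Finset κ, S B := by
      apply Set.Subset.antisymm
      · rintro z ⟨t, ht, rfl⟩
        obtain ⟨y, hynn, hyvec0, -, hyind0⟩ := lp_reduce (ι := ι) (fun j => WithLp.ofLp (g j)) 0
          (fun d _ _ => by simp) t ht
        have hyvec : ∑ j, y j • g j = ∑ j, t j • g j := by
          apply WithLp.ofLp_injective 2
          simpa [WithLp.ofLp_sum] using hyvec0
        have hyind : LinearIndependent ℝ (fun j : {j // y j ≠ 0} => g j) :=
          hyind0.map' (WithLp.linearEquiv 2 ℝ (ι → ℝ)).symm.toLinearMap (LinearEquiv.ker _)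
        set B : Finset κ := Finset.univ.filter (fun j => y j ≠ 0) with hB
        have hBmem : ∀ j : κ, j ∈ B ↔ y j ≠ 0 := fun j => by simp [hB]
        have hind : LinearIndependent ℝ (fun j : {j // j ∈ B} => g (j : κ)) := by
          rw [Fintype.linearIndependent_iff]
          intro f hf j
          refine Fintype.linearIndependent_iff.mp hyind
            (fun i => f ⟨i.1, (hBmem i.1).mpr i.2⟩) ?_ ⟨j.1, (hBmem j.1).mp j.2⟩
          rw [← hf]
          exact Fintype.sum_equiv
            ⟨fun i : {i // y i ≠ 0} => (⟨i.1, (hBmem i.1).mpr i.2⟩ : {j // j ∈ B}),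
             fun j => ⟨j.1, (hBmem j.1).mp j.2⟩, fun i => rfl, fun j => rfl⟩
            _ _ (fun i => rfl)
        refine Set.mem_iUnion.mpr ⟨B, hind, ⟨fun j => y (j : κ), fun j => hynn _, ?_⟩⟩
        rw [← hyvec]
        calc ∑ j : {j // j ∈ B}, y (j : κ) • g (j : κ)
            = ∑ j ∈ B, y j • g j := (Finset.sum_subtype (p := fun j => j ∈ B) B
              (fun j => Iff.rfl) (fun j => y j • g j)).symm
          _ = ∑ j, y j • g j := by
              apply Finset.sum_filter_of_ne
              intro j _ hj hyj
              exact hj (by simp [hyj])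
      · rintro z hz
        obtain ⟨B, -, t, htnn, rfl⟩ := Set.mem_iUnion.mp hz
        refine ⟨fun j => if hj : j ∈ B then t ⟨j, hj⟩ else 0, fun j => ?_, ?_⟩
        · by_cases hj : j ∈ B
          · simpa [hj] using htnn ⟨j, hj⟩
          · simp [hj]
        · rw [← Finset.sum_subset (Finset.subset_univ B)
            (fun j _ hj => by simp [hj])]
          rw [← Finset.sum_attach B fun j => (if hj : j ∈ B then t ⟨j, hj⟩ else 0) • g j]
          exact Finset.sum_congr rfl fun ⟨j, hj⟩ _ => by simp [hj]
    rw [hCunion]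
    apply isClosed_iUnion_of_finite
    intro B
    by_cases hB : LinearIndependent ℝ (fun j : {j // j ∈ B} => g (j : κ))
    · set L : ({j // j ∈ B} → ℝ) →ₗ[ℝ] EuclideanSpace ℝ ι :=
        { toFun := fun t => ∑ j : {j // j ∈ B}, t j • g (j : κ)
          map_add' := by
            intro t t'
            rw [← Finset.sum_add_distrib]
            exact Finset.sum_congr rfl fun j _ => add_smul _ _ _
          map_smul' := by
            intro r t
            rw [RingHom.id_apply, Finset.smul_sum]
            exact Finset.sum_congr rfl fun j _ => (smul_smul r (t j) (g (j : κ))).symm } with hL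
      have himg : S B = L '' {t | ∀ j, 0 ≤ t j} := by
        ext z
        constructor
        · rintro ⟨-, t, htnn, rfl⟩
          exact ⟨t, htnn, rfl⟩
        · rintro ⟨t, htnn, rfl⟩
          exact ⟨hB, t, htnn, rfl⟩
      rw [himg]
      have hker : LinearMap.ker L = ⊥ := LinearMap.ker_eq_bot'.mpr
        (fun t ht => funext fun j => Fintype.linearIndependent_iff.mp hB t ht j)
      have hemb := LinearMap.isClosedEmbedding_of_injective hker
      apply hemb.isClosedMap
      have : {t : {j // j ∈ B} → ℝ | ∀ j, 0 ≤ t j} = ⋂ j, {t | 0 ≤ t j} := by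
        ext t; simp [Set.mem_iInter]
      rw [this]
      exact isClosed_iInter fun j => isClosed_le continuous_const (continuous_apply j)
    · have : S B = ∅ := by
        ext z
        simp only [hS, Set.mem_setOf_eq, Set.mem_empty_iff_false, iff_false]
        rintro ⟨hind, -⟩
        exact hB hind
      rw [this]
      exact isClosed_empty
  let PC : ProperCone ℝ (EuclideanSpace ℝ ι) :=
    { toSubmodule := K.toPointedCone hzero, isClosed' := hclosed }
  obtain ⟨y, hy1, hy2⟩ :=
    PC.hyperplane_separation' (x₀ := p)
      (by exact fun hmem => hp hmem)
  refine ⟨y, fun j => hy1 (g j) ⟨fun k => if k = j then 1 else 0, fun k => by positivity, by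
    simp [ite_smul]⟩, by exact hy2⟩

/-- Farkas lemma in coordinates. -/
lemma lp_farkas' (g : κ → ι → ℝ) (p : ι → ℝ)
    (hp : ¬ ∃ t : κ → ℝ, (∀ j, 0 ≤ t j) ∧ ∑ j, t j • g j = p) :
    ∃ y : ι → ℝ, (∀ j, 0 ≤ ∑ i, g j i * y i) ∧ ∑ i, p i * y i < 0 := by
  classical
  set e := WithLp.linearEquiv 2 ℝ (ι → ℝ) with he
  set G : κ → EuclideanSpace ℝ ι := fun j => e.symm (g j) with hG
  set P : EuclideanSpace ℝ ι := e.symm p with hP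
  have hp' : ¬ ∃ t : κ → ℝ, (∀ j, 0 ≤ t j) ∧ ∑ j, t j • G j = P := by
    rintro ⟨t, htnn, htsum⟩
    refine hp ⟨t, htnn, ?_⟩
    have := congrArg e htsum
    rw [map_sum] at this
    simpa [hG, hP] using this
  obtain ⟨y, hy1, hy2⟩ := lp_farkas G P hp'
  refine ⟨fun i => y i, fun j => ?_, ?_⟩
  · have := hy1 j
    rw [PiLp.inner_apply] at this
    simpa [hG, he, WithLp.coe_symm_linearEquiv, RCLike.inner_apply, starRingEnd_apply, mul_comm] using this
  · rw [PiLp.inner_apply] at hy2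
    simpa [hP, he, WithLp.coe_symm_linearEquiv, RCLike.inner_apply, starRingEnd_apply, mul_comm] using hy2

/-- Strong duality for standard-form LP: existence of a dual optimal solution. -/
lemma lp_strong_duality (g : κ → ι → ℝ) (c : κ → ℝ) (w : ι → ℝ)
    (hfeas : ∃ x : κ → ℝ, (∀ j, 0 ≤ x j) ∧ ∑ j, x j • g j = w)
    (hbdd : BddBelow {v | ∃ x : κ → ℝ, (∀ j, 0 ≤ x j) ∧ ∑ j, x j • g j = w ∧
      v = ∑ j, c j * x j}) :
    ∃ u : ι → ℝ, (∀ j, ∑ i, g j i * u i ≤ c j) ∧ ∑ i, u i * w i =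
      sInf {v | ∃ x : κ → ℝ, (∀ j, 0 ≤ x j) ∧ ∑ j, x j • g j = w ∧
        v = ∑ j, c j * x j} := by
  classical
  set vals := {v | ∃ x : κ → ℝ, (∀ j, 0 ≤ x j) ∧ ∑ j, x j • g j = w ∧
    v = ∑ j, c j * x j} with hvals
  obtain ⟨x₀, hx₀, hx₀w⟩ := hfeas
  have hvne : vals.Nonempty := ⟨_, x₀, hx₀, hx₀w, rfl⟩
  set v := sInf vals with hv
  have hwcoord : ∀ (x : κ → ℝ), (∑ j, x j • g j = w) → ∀ i, w i = ∑ j, x j * g j i := by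
    intro x hx i
    rw [← hx]
    simp [Finset.sum_apply]
  -- weak duality
  have hweak : ∀ u : ι → ℝ, (∀ j, ∑ i, g j i * u i ≤ c j) → ∑ i, u i * w i ≤ v := by
    intro u hu
    apply le_csInf hvne
    rintro r ⟨x, hxnn, hxw, rfl⟩
    calc ∑ i, u i * w i = ∑ i, u i * ∑ j, x j * g j i := by
          refine Finset.sum_congr rfl fun i _ => by rw [hwcoord x hxw i]
      _ = ∑ i, ∑ j, x j * (g j i * u i) := by
          refine Finset.sum_congr rfl fun i _ => ?_
          rw [Finset.mul_sum]
          exact Finset.sum_congr rfl fun j _ => by ring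
      _ = ∑ j, ∑ i, x j * (g j i * u i) := Finset.sum_comm
      _ = ∑ j, x j * ∑ i, g j i * u i := by
          refine Finset.sum_congr rfl fun j _ => ?_
          rw [Finset.mul_sum]
      _ ≤ ∑ j, x j * c j :=
          Finset.sum_le_sum fun j _ => mul_le_mul_of_nonneg_left (hu j) (hxnn j)
      _ = ∑ j, c j * x j := Finset.sum_congr rfl fun j _ => mul_comm _ _
  -- approximate duals via Farkas
  have happrox : ∀ ε : ℝ, 0 < ε → ∃ u : ι → ℝ,
      (∀ j, ∑ i, g j i * u i ≤ c j) ∧ v - ε < ∑ i, u i * w i := by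
    intro ε hε
    set G : Option κ → Option ι → ℝ := fun j? => Option.elim j?
      (fun i? => Option.elim i? 1 (fun _ => 0))
      (fun j => fun i? => Option.elim i? (c j) (fun i => g j i)) with hGdef
    set P : Option ι → ℝ := fun i? => Option.elim i? (v - ε) (fun i => w i) with hPdef
    have hnot : ¬ ∃ t : Option κ → ℝ, (∀ j, 0 ≤ t j) ∧ ∑ j, t j • G j = P := by
      rintro ⟨t, htnn, htsum⟩
      set x := fun j => t (some j) with hxdef
      have hcoord : ∀ i? : Option ι, ∑ j?, t j? * G j? i? = P i? := by
        intro i?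
        calc ∑ j?, t j? * G j? i? = (∑ j?, t j? • G j?) i? := by
              simp [Finset.sum_apply]
          _ = P i? := by rw [htsum]
      have hfeasx : ∑ j, x j • g j = w := by
        funext i
        have := hcoord (some i)
        simp only [hGdef, hPdef, Option.elim, Fintype.sum_option] at this
        simpa [Finset.sum_apply, hxdef] using this
      have hcostx : t none + ∑ j, x j * c j = v - ε := by
        have := hcoord none
        simpa [hGdef, hPdef, Fintype.sum_option, hxdef] using this
      have hmem : (∑ j, c j * x j) ∈ vals :=
        ⟨x, fun j => htnn (some j), hfeasx, rfl⟩
      have h1 : v ≤ ∑ j, c j * x j := csInf_le hbdd hmem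
      have h2 : ∑ j, x j * c j = ∑ j, c j * x j :=
        Finset.sum_congr rfl fun j _ => mul_comm _ _
      have := htnn none
      linarith
    obtain ⟨y, hy1, hy2⟩ := lp_farkas' G P hnot
    set α := y none with hα
    set u₀ := fun i => y (some i) with hu₀
    have hαnn : 0 ≤ α := by
      have := hy1 none
      simpa [hGdef, Fintype.sum_option, hα] using this
    have hconstr : ∀ j, 0 ≤ c j * α + ∑ i, g j i * u₀ i := by
      intro j
      have := hy1 (some j)
      simpa [hGdef, Fintype.sum_option, hα, hu₀] using this
    have hpoint : (v - ε) * α + ∑ i, w i * u₀ i < 0 := by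
      have := hy2
      simpa [hPdef, Fintype.sum_option, hα, hu₀] using this
    have hαpos : 0 < α := by
      rcases lt_or_eq_of_le hαnn with h | h
      · exact h
      · exfalso
        have hwu : ∑ i, w i * u₀ i = ∑ j, x₀ j * ∑ i, g j i * u₀ i := by
          calc ∑ i, w i * u₀ i = ∑ i, (∑ j, x₀ j * g j i) * u₀ i := by
                refine Finset.sum_congr rfl fun i _ => by rw [← hwcoord x₀ hx₀w i]
            _ = ∑ i, ∑ j, x₀ j * (g j i * u₀ i) := by
                refine Finset.sum_congr rfl fun i _ => ?_
                rw [Finset.sum_mul]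
                exact Finset.sum_congr rfl fun j _ => by ring
            _ = ∑ j, ∑ i, x₀ j * (g j i * u₀ i) := Finset.sum_comm
            _ = ∑ j, x₀ j * ∑ i, g j i * u₀ i := by
                refine Finset.sum_congr rfl fun j _ => ?_
                rw [Finset.mul_sum]
        have hge : 0 ≤ ∑ i, w i * u₀ i := by
          rw [hwu]
          apply Finset.sum_nonneg
          intro j _
          have := hconstr j
          rw [← h] at this
          simp only [mul_zero, zero_add] at this
          exact mul_nonneg (hx₀ j) this
        rw [← h] at hpoint
        simp only [mul_zero, zero_add] at hpoint
        linarith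
    refine ⟨fun i => -u₀ i / α, fun j => ?_, ?_⟩
    · have := hconstr j
      have hsum : ∑ i, g j i * (-u₀ i / α) = (-(∑ i, g j i * u₀ i)) / α := by
        rw [← Finset.sum_neg_distrib, Finset.sum_div]
        exact Finset.sum_congr rfl fun i _ => by ring
      rw [hsum, div_le_iff₀ hαpos]
      nlinarith
    · have hsum : ∑ i, (-u₀ i / α) * w i = (-(∑ i, w i * u₀ i)) / α := by
        rw [← Finset.sum_neg_distrib, Finset.sum_div]
        exact Finset.sum_congr rfl fun i _ => by ring
      rw [hsum, lt_div_iff₀ hαpos]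
      nlinarith
  -- dual LP as a standard-form primal
  set G' : ((ι ⊕ ι) ⊕ κ) → κ → ℝ := fun s => Sum.elim
    (Sum.elim (fun i j => g j i) (fun i j => -g j i))
    (fun j' j => if j = j' then 1 else 0) s with hG'
  set c' : ((ι ⊕ ι) ⊕ κ) → ℝ := fun s => Sum.elim
    (Sum.elim (fun i => -w i) (fun i => w i)) (fun _ => 0) s with hc'
  have hsumG : ∀ (xx : ((ι ⊕ ι) ⊕ κ) → ℝ), ∑ s, xx s • G' s =
      (fun j => ∑ i, g j i * (xx (Sum.inl (Sum.inl i)) - xx (Sum.inl (Sum.inr i))) +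
        xx (Sum.inr j)) := by
    intro xx
    funext j
    rw [Finset.sum_apply]
    simp only [Pi.smul_apply, smul_eq_mul]
    rw [Fintype.sum_sum_type, Fintype.sum_sum_type]
    simp only [hG', Sum.elim_inl, Sum.elim_inr]
    have h2 : ∑ j', xx (Sum.inr j') * (if j = j' then 1 else 0) = xx (Sum.inr j) := by
      simp [mul_ite]
    rw [h2]
    have h3 : ∑ i, g j i * (xx (Sum.inl (Sum.inl i)) - xx (Sum.inl (Sum.inr i))) =
        ∑ i, xx (Sum.inl (Sum.inl i)) * g j i + ∑ i, xx (Sum.inl (Sum.inr i)) * (-g j i) := by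
      rw [← Finset.sum_add_distrib]
      exact Finset.sum_congr rfl fun i _ => by ring
    rw [h3]
  have hsumc : ∀ (xx : ((ι ⊕ ι) ⊕ κ) → ℝ), ∑ s, c' s * xx s =
      -∑ i, (xx (Sum.inl (Sum.inl i)) - xx (Sum.inl (Sum.inr i))) * w i := by
    intro xx
    rw [Fintype.sum_sum_type, Fintype.sum_sum_type]
    simp only [hc', Sum.elim_inl, Sum.elim_inr]
    rw [← Finset.sum_neg_distrib, ← Finset.sum_add_distrib]
    have : ∑ _j : κ, (0:ℝ) * xx (Sum.inr _j) = 0 := by simp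
    rw [this, add_zero]
    exact Finset.sum_congr rfl fun i _ => by ring
  have hbuild : ∀ u : ι → ℝ, (∀ j, ∑ i, g j i * u i ≤ c j) →
      ∃ xx : ((ι ⊕ ι) ⊕ κ) → ℝ, (∀ s, 0 ≤ xx s) ∧ ∑ s, xx s • G' s = c ∧
        ∑ s, c' s * xx s = -∑ i, u i * w i := by
    intro u hu
    refine ⟨fun s => Sum.elim (Sum.elim (fun i => max (u i) 0) (fun i => max (-u i) 0))
      (fun j => c j - ∑ i, g j i * u i) s, ?_, ?_, ?_⟩
    · rintro ((i | i) | j) <;> simp only [Sum.elim_inl, Sum.elim_inr]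
      · exact le_max_right _ _
      · exact le_max_right _ _
      · exact sub_nonneg.mpr (hu j)
    · rw [hsumG]
      funext j
      simp only [Sum.elim_inl, Sum.elim_inr]
      have : ∀ i, max (u i) 0 - max (-u i) 0 = u i := fun i =>
        max_zero_sub_max_neg_zero_eq_self (u i)
      rw [Finset.sum_congr rfl fun i _ => by rw [this i]]
      ring
    · rw [hsumc]
      simp only [Sum.elim_inl, Sum.elim_inr]
      rw [← Finset.sum_neg_distrib, ← Finset.sum_neg_distrib]
      refine Finset.sum_congr rfl fun i _ => ?_
      rw [max_zero_sub_max_neg_zero_eq_self (u i)]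
  -- the dual values set
  set vals' := {r | ∃ xx : ((ι ⊕ ι) ⊕ κ) → ℝ, (∀ s, 0 ≤ xx s) ∧ ∑ s, xx s • G' s = c ∧
    r = ∑ s, c' s * xx s} with hvals'
  have hdualfeas : ∀ (xx : ((ι ⊕ ι) ⊕ κ) → ℝ), (∀ s, 0 ≤ xx s) → ∑ s, xx s • G' s = c →
      (∀ j, ∑ i, g j i * (xx (Sum.inl (Sum.inl i)) - xx (Sum.inl (Sum.inr i))) ≤ c j) := by
    intro xx hnn hcon j
    have := congrFun ((hsumG xx).symm.trans hcon) j
    have h0 := hnn (Sum.inr j)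
    linarith [this]
  have hbdd' : BddBelow vals' := by
    refine ⟨-v, ?_⟩
    rintro r ⟨xx, hnn, hcon, rfl⟩
    rw [hsumc xx]
    have := hweak (fun i => xx (Sum.inl (Sum.inl i)) - xx (Sum.inl (Sum.inr i)))
      (hdualfeas xx hnn hcon)
    linarith
  obtain ⟨u₁, hu₁, -⟩ := happrox 1 one_pos
  obtain ⟨xx₁, hxx₁nn, hxx₁con, -⟩ := hbuild u₁ hu₁
  have hfeas' : ∃ xx : ((ι ⊕ ι) ⊕ κ) → ℝ, (∀ s, 0 ≤ xx s) ∧ ∑ s, xx s • G' s = c :=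
    ⟨xx₁, hxx₁nn, hxx₁con⟩
  have hvne' : vals'.Nonempty := ⟨_, xx₁, hxx₁nn, hxx₁con, rfl⟩
  have hinf' : sInf vals' = -v := by
    apply le_antisymm
    · apply le_of_forall_pos_le_add
      intro ε hε
      obtain ⟨u, hu, huv⟩ := happrox ε hε
      obtain ⟨xx, hnn, hcon, hcost⟩ := hbuild u hu
      have hmem : (∑ s, c' s * xx s) ∈ vals' := ⟨xx, hnn, hcon, rfl⟩
      have := csInf_le hbdd' hmem
      rw [hcost] at this
      linarith
    · apply le_csInf hvne'
      rintro r ⟨xx, hnn, hcon, rfl⟩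
      rw [hsumc xx]
      have := hweak (fun i => xx (Sum.inl (Sum.inl i)) - xx (Sum.inl (Sum.inr i)))
        (hdualfeas xx hnn hcon)
      linarith
  obtain ⟨xx, hnn, hcon, hcost⟩ := lp_attain G' c' c hfeas' hbdd'
  refine ⟨fun i => xx (Sum.inl (Sum.inl i)) - xx (Sum.inl (Sum.inr i)),
    hdualfeas xx hnn hcon, ?_⟩
  have h1 : ∑ s, c' s * xx s = -v := by
    rw [hcost, ← hvals', hinf']
  rw [hsumc xx] at h1
  have h2 : ∑ i, (fun i => xx (Sum.inl (Sum.inl i)) - xx (Sum.inl (Sum.inr i))) i * w i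
      = ∑ i, (xx (Sum.inl (Sum.inl i)) - xx (Sum.inl (Sum.inr i))) * w i := rfl
  rw [h2]
  linarith

end LPAux

/-- The value function of the LP min ⟨c,x⟩ s.t. Ax = b, x ≥ 0. -/
noncomputable def lpVal {m n : ℕ} (A : Matrix (Fin m) (Fin n) ℝ) (c : Fin n → ℝ)
    (b : Fin m → ℝ) : ℝ :=
  sInf {v | ∃ x : Fin n → ℝ, (∀ j, 0 ≤ x j) ∧ A.mulVec x = b ∧ v = ∑ j, c j * x j}

/-- Directional derivative of the LP value function equals the support function of the
dual optimal set. -/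
theorem stmt9 {m n : ℕ} (A : Matrix (Fin m) (Fin n) ℝ) (c : Fin n → ℝ) (b h : Fin m → ℝ)
    (hfeas : ∃ x : Fin n → ℝ, (∀ j, 0 ≤ x j) ∧ A.mulVec x = b)
    (hbdd : BddBelow {v | ∃ x : Fin n → ℝ, (∀ j, 0 ≤ x j) ∧ A.mulVec x = b ∧
      v = ∑ j, c j * x j})
    (hsmall : ∃ ε > (0 : ℝ), ∀ t : ℝ, 0 < t → t < ε →
      (∃ x : Fin n → ℝ, (∀ j, 0 ≤ x j) ∧ A.mulVec x = b + t • h) ∧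
      BddBelow {v | ∃ x : Fin n → ℝ, (∀ j, 0 ≤ x j) ∧ A.mulVec x = b + t • h ∧
        v = ∑ j, c j * x j}) :
    Filter.Tendsto (fun t : ℝ => (lpVal A c (b + t • h) - lpVal A c b) / t)
      (nhdsWithin 0 (Set.Ioi 0))
      (nhds (sSup {r | ∃ u : Fin m → ℝ, (∀ j, ∑ i, A i j * u i ≤ c j) ∧
        (∑ i, u i * b i = lpVal A c b) ∧ r = ∑ i, u i * h i})) := by
  classical
  set gA : Fin n → Fin m → ℝ := fun j i => A i j with hgA
  have hmv : ∀ x : Fin n → ℝ, A.mulVec x = ∑ j, x j • gA j := by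
    intro x
    funext i
    rw [Finset.sum_apply]
    simp [Matrix.mulVec, dotProduct, hgA, mul_comm]
  have hset : ∀ w : Fin m → ℝ,
      {v | ∃ x : Fin n → ℝ, (∀ j, 0 ≤ x j) ∧ A.mulVec x = w ∧ v = ∑ j, c j * x j} =
      {v | ∃ x : Fin n → ℝ, (∀ j, 0 ≤ x j) ∧ ∑ j, x j • gA j = w ∧ v = ∑ j, c j * x j} := by
    intro w
    ext v
    constructor
    · rintro ⟨x, hx, hxw, rfl⟩; exact ⟨x, hx, (hmv x) ▸ hxw, rfl⟩
    · rintro ⟨x, hx, hxw, rfl⟩; exact ⟨x, hx, (hmv x) ▸ hxw, rfl⟩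
  have hlpVal : ∀ w : Fin m → ℝ, lpVal A c w =
      sInf {v | ∃ x : Fin n → ℝ, (∀ j, 0 ≤ x j) ∧ ∑ j, x j • gA j = w ∧
        v = ∑ j, c j * x j} := by
    intro w; rw [lpVal, hset w]
  set g0 : ℝ := lpVal A c b with hg0
  -- coordinates of combinations
  have hco : ∀ (x : Fin n → ℝ) (w : Fin m → ℝ), ∑ j, x j • gA j = w →
      ∀ i, w i = ∑ j, x j * A i j := by
    intro x w hw i
    rw [← hw, Finset.sum_apply]
    simp [hgA]
  -- weak duality
  have hweak : ∀ (u w : Fin m → ℝ) (x : Fin n → ℝ), (∀ j, ∑ i, A i j * u i ≤ c j) →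
      (∀ j, 0 ≤ x j) → ∑ j, x j • gA j = w → ∑ i, u i * w i ≤ ∑ j, c j * x j := by
    intro u w x hu hx hxw
    calc ∑ i, u i * w i = ∑ i, ∑ j, x j * (A i j * u i) := by
          refine Finset.sum_congr rfl fun i _ => ?_
          rw [hco x w hxw i, Finset.mul_sum]
          exact Finset.sum_congr rfl fun j _ => by ring
      _ = ∑ j, ∑ i, x j * (A i j * u i) := Finset.sum_comm
      _ = ∑ j, x j * ∑ i, A i j * u i := by
          refine Finset.sum_congr rfl fun j _ => ?_
          rw [Finset.mul_sum]
      _ ≤ ∑ j, x j * c j := Finset.sum_le_sum fun j _ =>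
          mul_le_mul_of_nonneg_left (hu j) (hx j)
      _ = ∑ j, c j * x j := Finset.sum_congr rfl fun j _ => mul_comm _ _
  -- primal attainment and dual optimum at b
  have hfeasG : ∃ x : Fin n → ℝ, (∀ j, 0 ≤ x j) ∧ ∑ j, x j • gA j = b := by
    obtain ⟨x, hx, hxw⟩ := hfeas
    exact ⟨x, hx, (hmv x) ▸ hxw⟩
  have hbddG := (hset b) ▸ hbdd
  obtain ⟨x₀, hx₀nn, hx₀w, hx₀cost⟩ := lp_attain gA c b hfeasG hbddG
  obtain ⟨u₀, hu₀, hu₀val⟩ := lp_strong_duality gA c b hfeasG hbddG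
  have hu₀A : ∀ j, ∑ i, A i j * u₀ i ≤ c j := fun j => by
    simpa [hgA] using hu₀ j
  have hx₀costv : ∑ j, c j * x₀ j = g0 := by rw [hx₀cost, ← hlpVal b]
  have hu₀valv : ∑ i, u₀ i * b i = g0 := by rw [hu₀val, ← hlpVal b]
  obtain ⟨ε, hε, hsm⟩ := hsmall
  -- the auxiliary LP: min c·x - g0·λ  s.t.  A x - λ b = h, x ≥ 0, λ ≥ 0
  set G2 : (Fin n ⊕ Unit) → Fin m → ℝ := fun s => Sum.elim gA (fun _ => -b) s with hG2
  set c2 : (Fin n ⊕ Unit) → ℝ := fun s => Sum.elim c (fun _ => -g0) s with hc2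
  have hsumG2 : ∀ xx : (Fin n ⊕ Unit) → ℝ,
      ∑ s, xx s • G2 s = (∑ j, xx (Sum.inl j) • gA j) - xx (Sum.inr ()) • b := by
    intro xx
    rw [Fintype.sum_sum_type]
    have : ∑ u : Unit, xx (Sum.inr u) • G2 (Sum.inr u) = xx (Sum.inr ()) • (-b) := by
      simp [hG2]
    rw [this]
    simp [hG2, sub_eq_add_neg]
  have hsumc2 : ∀ xx : (Fin n ⊕ Unit) → ℝ,
      ∑ s, c2 s * xx s = (∑ j, c j * xx (Sum.inl j)) - g0 * xx (Sum.inr ()) := by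
    intro xx
    rw [Fintype.sum_sum_type]
    have : ∑ u : Unit, c2 (Sum.inr u) * xx (Sum.inr u) = -(g0 * xx (Sum.inr ())) := by
      simp [hc2]
    rw [this]
    simp [hc2, sub_eq_add_neg]
  set vals2 := {v | ∃ xx : (Fin n ⊕ Unit) → ℝ, (∀ s, 0 ≤ xx s) ∧ ∑ s, xx s • G2 s = h ∧
    v = ∑ s, c2 s * xx s} with hvals2
  -- feasibility of the auxiliary LP
  have hfeas2 : ∃ xx : (Fin n ⊕ Unit) → ℝ, (∀ s, 0 ≤ xx s) ∧ ∑ s, xx s • G2 s = h := by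
    obtain ⟨⟨x₁, hx₁nn, hx₁w⟩, -⟩ := hsm (ε/2) (by linarith) (by linarith)
    have hx₁w' : ∑ j, x₁ j • gA j = b + (ε/2) • h := (hmv x₁) ▸ hx₁w
    refine ⟨Sum.elim (fun j => x₁ j / (ε/2)) (fun _ => 1/(ε/2)), ?_, ?_⟩
    · rintro (j | u) <;> simp only [Sum.elim_inl, Sum.elim_inr]
      · exact div_nonneg (hx₁nn j) (by linarith)
      · positivity
    · rw [hsumG2]
      simp only [Sum.elim_inl, Sum.elim_inr]
      have hne : (ε/2) ≠ 0 := by positivity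
      have hrw : ∀ j : Fin n, (x₁ j / (ε/2)) • gA j = (ε/2)⁻¹ • (x₁ j • gA j) := by
        intro j
        rw [div_eq_inv_mul, ← smul_smul]
      rw [Finset.sum_congr rfl fun j _ => hrw j, ← Finset.smul_sum, hx₁w']
      funext i
      simp only [Pi.sub_apply, Pi.smul_apply, Pi.add_apply, smul_eq_mul, one_div]
      field_simp
      ring
  -- decompose a feasible point of the auxiliary LP
  have hdecomp : ∀ xx : (Fin n ⊕ Unit) → ℝ, ∑ s, xx s • G2 s = h →
      ∑ j, xx (Sum.inl j) • gA j = h + xx (Sum.inr ()) • b := by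
    intro xx hcon
    have h1 := (hsumG2 xx).symm.trans hcon
    exact sub_eq_iff_eq_add.mp h1
  have hsplit : ∀ (u : Fin m → ℝ) (lam : ℝ),
      ∑ i, u i * (h + lam • b) i = ∑ i, u i * h i + lam * ∑ i, u i * b i := by
    intro u lam
    calc ∑ i, u i * (h + lam • b) i = ∑ i, (u i * h i + lam * (u i * b i)) := by
          refine Finset.sum_congr rfl fun i _ => ?_
          simp only [Pi.add_apply, Pi.smul_apply, smul_eq_mul]
          ring
      _ = ∑ i, u i * h i + lam * ∑ i, u i * b i := by
          rw [Finset.sum_add_distrib, Finset.mul_sum]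
  -- boundedness of the auxiliary LP
  have hbdd2 : BddBelow vals2 := by
    refine ⟨∑ i, u₀ i * h i, ?_⟩
    rintro r ⟨xx, hnn, hcon, rfl⟩
    rw [hsumc2]
    have hxgA := hdecomp xx hcon
    have hw := hweak u₀ (h + xx (Sum.inr ()) • b) (fun j => xx (Sum.inl j)) hu₀A
      (fun j => hnn (Sum.inl j)) hxgA
    rw [hsplit u₀ (xx (Sum.inr ())), hu₀valv] at hw
    have hcomm : xx (Sum.inr ()) * g0 = g0 * xx (Sum.inr ()) := mul_comm _ _
    linarith
  -- strong duality and attainment for the auxiliary LP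
  obtain ⟨u₂, hu₂, hu₂val⟩ := lp_strong_duality G2 c2 h hfeas2 hbdd2
  obtain ⟨xx2, hxx2nn, hxx2con, hxx2cost⟩ := lp_attain G2 c2 h hfeas2 hbdd2
  set V : ℝ := sInf vals2 with hV
  have hu₂val' : ∑ i, u₂ i * h i = V := hu₂val
  have hxx2cost' : ∑ s, c2 s * xx2 s = V := hxx2cost
  set x2 : Fin n → ℝ := fun j => xx2 (Sum.inl j) with hx2
  set lam2 : ℝ := xx2 (Sum.inr ()) with hlam2
  have hlam2nn : 0 ≤ lam2 := hxx2nn (Sum.inr ())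
  have hx2gA : ∑ j, x2 j • gA j = h + lam2 • b := hdecomp xx2 hxx2con
  have hx2cost : ∑ j, c j * x2 j - g0 * lam2 = V := by
    rw [← hxx2cost', hsumc2]
  have hu₂A : ∀ j, ∑ i, A i j * u₂ i ≤ c j := by
    intro j
    simpa [hG2, hc2, hgA] using hu₂ (Sum.inl j)
  have hu₂b : g0 ≤ ∑ i, u₂ i * b i := by
    have := hu₂ (Sum.inr ())
    simp only [hG2, hc2, Sum.elim_inr, Pi.neg_apply, neg_mul] at this
    have h2 : ∑ i, -(b i * u₂ i) = -∑ i, b i * u₂ i := by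
      rw [Finset.sum_neg_distrib]
    rw [h2] at this
    have h3 : ∑ i, b i * u₂ i = ∑ i, u₂ i * b i :=
      Finset.sum_congr rfl fun i _ => mul_comm _ _
    linarith [h3 ▸ this]
  have hu₂b' : ∑ i, u₂ i * b i ≤ g0 := by
    have := hweak u₂ b x₀ hu₂A hx₀nn hx₀w
    linarith [hx₀costv ▸ this]
  have hu₂beq : ∑ i, u₂ i * b i = g0 := le_antisymm hu₂b' hu₂b
  -- the dual optimal set and its support value
  set S := {r | ∃ u : Fin m → ℝ, (∀ j, ∑ i, A i j * u i ≤ c j) ∧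
    (∑ i, u i * b i = lpVal A c b) ∧ r = ∑ i, u i * h i} with hS
  have hub : ∀ r ∈ S, r ≤ V := by
    rintro r ⟨u, huA, hub, rfl⟩
    have hw := hweak u (h + lam2 • b) x2 huA (fun j => hxx2nn (Sum.inl j)) hx2gA
    rw [hsplit u lam2] at hw
    rw [← hg0] at hub
    rw [hub] at hw
    linarith
  have hmemS : V ∈ S := ⟨u₂, hu₂A, by rw [← hg0]; exact hu₂beq, hu₂val'.symm⟩
  have hSsup : sSup S = V := le_antisymm (csSup_le ⟨V, hmemS⟩ hub) (le_csSup ⟨V, hub⟩ hmemS)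
  -- the difference quotient is eventually constant, equal to V
  set δ : ℝ := min ε (1/(lam2+1)) with hδ
  have hδpos : 0 < δ := lt_min hε (by positivity)
  have hkey : ∀ s : ℝ, 0 < s → s < δ →
      lpVal A c (b + s • h) = g0 + s * V := by
    intro s hs0 hsδ
    have hsε : s < ε := lt_of_lt_of_le hsδ (min_le_left _ _)
    have hslam : s * lam2 < 1 := by
      have h1 : s < 1/(lam2+1) := lt_of_lt_of_le hsδ (min_le_right _ _)
      have h2 : s * (lam2 + 1) < 1 := by
        rw [lt_div_iff₀ (by positivity : (0:ℝ) < lam2 + 1)] at h1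
        linarith
      nlinarith
    set y : Fin n → ℝ := fun j => (1 - s*lam2) * x₀ j + s * x2 j with hy
    have hynn : ∀ j, 0 ≤ y j := by
      intro j
      have := hx₀nn j
      have := hxx2nn (Sum.inl j)
      simp only [hy]
      nlinarith [hxx2nn (Sum.inl j), hx₀nn j]
    have hygA : ∑ j, y j • gA j = b + s • h := by
      calc ∑ j, y j • gA j
          = ∑ j, ((1 - s*lam2) • (x₀ j • gA j) + s • (x2 j • gA j)) := by
            refine Finset.sum_congr rfl fun j _ => ?_
            simp only [hy, add_smul, smul_smul]
        _ = (1 - s*lam2) • (∑ j, x₀ j • gA j) + s • (∑ j, x2 j • gA j) := by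
            rw [Finset.sum_add_distrib, Finset.smul_sum, Finset.smul_sum]
        _ = (1 - s*lam2) • b + s • (h + lam2 • b) := by rw [hx₀w, hx2gA]
        _ = b + s • h := by
            funext i
            simp only [Pi.add_apply, Pi.smul_apply, smul_eq_mul]
            ring
    have hycost : ∑ j, c j * y j = g0 + s * V := by
      calc ∑ j, c j * y j
          = ∑ j, ((1 - s*lam2) * (c j * x₀ j) + s * (c j * x2 j)) := by
            refine Finset.sum_congr rfl fun j _ => by simp only [hy]; ring
        _ = (1 - s*lam2) * ∑ j, c j * x₀ j + s * ∑ j, c j * x2 j := by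
            rw [Finset.sum_add_distrib, Finset.mul_sum, Finset.mul_sum]
        _ = (1 - s*lam2) * g0 + s * (V + g0 * lam2) := by
            rw [hx₀costv]
            congr 1
            rw [mul_comm s _, mul_comm s _]
            congr 1
            linarith [hx2cost]
        _ = g0 + s * V := by ring
    obtain ⟨⟨x₃, hx₃nn, hx₃w⟩, hbdds⟩ := hsm s hs0 hsε
    have hnes : {v | ∃ x : Fin n → ℝ, (∀ j, 0 ≤ x j) ∧ ∑ j, x j • gA j = b + s • h ∧
        v = ∑ j, c j * x j}.Nonempty := ⟨_, x₃, hx₃nn, (hmv x₃) ▸ hx₃w, rfl⟩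
    apply le_antisymm
    · rw [hlpVal]
      exact csInf_le ((hset (b + s • h)) ▸ hbdds) ⟨y, hynn, hygA, hycost.symm⟩
    · rw [hlpVal]
      apply le_csInf hnes
      rintro r ⟨x, hxnn, hxw, rfl⟩
      have hw := hweak u₂ (b + s • h) x hu₂A hxnn hxw
      have hsp : ∑ i, u₂ i * (b + s • h) i = ∑ i, u₂ i * b i + s * ∑ i, u₂ i * h i := by
        calc ∑ i, u₂ i * (b + s • h) i = ∑ i, (u₂ i * b i + s * (u₂ i * h i)) := by
              refine Finset.sum_congr rfl fun i _ => ?_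
              simp only [Pi.add_apply, Pi.smul_apply, smul_eq_mul]
              ring
          _ = _ := by rw [Finset.sum_add_distrib, Finset.mul_sum]
      rw [hsp, hu₂beq, hu₂val'] at hw
      linarith
  -- conclude
  rw [hSsup]
  have heq : (fun t : ℝ => (lpVal A c (b + t • h) - lpVal A c b) / t) =ᶠ[nhdsWithin 0 (Set.Ioi 0)]
      (fun _ => V) := by
    filter_upwards [Ioo_mem_nhdsGT_of_mem (Set.mem_Ico.mpr ⟨le_refl (0:ℝ), hδpos⟩)] with s hs
    obtain ⟨hs0, hsδ⟩ := hs
    rw [hkey s hs0 hsδ, ← hg0]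
    field_simp
    ring
  exact Filter.Tendsto.congr' heq.symm tendsto_const_nhds
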